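/- arXiv:2208.10079 — 2 statements merged into one kernel-verified Lean document; each statement's English description precedes it below -/
import Mathlib

section
/- For every 2 ≤ i ≤ m and every j with i ≤ j ≤ m, one has ℓ_{i,j} = 0. -/
open Finset

/-- `dseq a i` is `gcd(a 1, …, a i)`. -/
def dseq (a : ℕ → ℕ) (i : ℕ) : ℕ := Finset.gcd (Finset.Icc 1 i) a

/-- `BAm m a ℓ` says that the tuple `(ℓ 1, …, ℓ m)` (encoded as a function on `ℕ`
supported on `[1, m]`) belongs to the set `B(A_m)`, i.e. `0 ≤ ℓ i ≤ d_{i-1}/d_i − 1`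
for all `2 ≤ i ≤ m`. -/
def BAm (m : ℕ) (a : ℕ → ℕ) (ℓ : ℕ → ℕ) : Prop :=
  (∀ j, (j < 1 ∨ m < j) → ℓ j = 0) ∧
    ∀ i, 2 ≤ i → i ≤ m → ℓ i < dseq a (i - 1) / dseq a i

/-- `Telescopic m a` says that `(a 1, …, a m)` is a telescopic sequence. -/
def Telescopic (m : ℕ) (a : ℕ → ℕ) : Prop :=
  2 ≤ m ∧ (∀ i, 1 ≤ i → i ≤ m → 2 ≤ a i) ∧ dseq a m = 1 ∧
    ∀ i, 2 ≤ i → i ≤ m → ∃ ℓ : ℕ → ℕ, (∀ j, (j < 1 ∨ i ≤ j) → ℓ j = 0) ∧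
      a i * dseq a (i - 1) = dseq a i * ∑ j ∈ Finset.Icc 1 m, ℓ j * a j

lemma dseq_dvd (a : ℕ → ℕ) {j k : ℕ} (h1 : 1 ≤ k) (h2 : k ≤ j) : dseq a j ∣ a k :=
  Finset.gcd_dvd (Finset.mem_Icc.mpr ⟨h1, h2⟩)

lemma dseq_dvd_dseq (a : ℕ → ℕ) {k j : ℕ} (h : k ≤ j) : dseq a j ∣ dseq a k :=
  Finset.dvd_gcd fun x hx => by
    rw [Finset.mem_Icc] at hx; exact dseq_dvd a hx.1 (hx.2.trans h)

lemma dseq_succ (a : ℕ → ℕ) (j : ℕ) : dseq a (j+1) = Nat.gcd (a (j+1)) (dseq a j) := by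
  unfold dseq
  rw [show Finset.Icc 1 (j+1) = insert (j+1) (Finset.Icc 1 j) by
    ext x; simp only [Finset.mem_Icc, Finset.mem_insert]; omega]
  rw [Finset.gcd_insert]
  rfl


/-- If `ℓ = (ℓ_{i,1}, …, ℓ_{i,m})` is the unique element of `B(A_m)` with
`Σ_{j=1}^m a j * ℓ j = a i * d (i-1) / d i` (stated multiplied through by `d i`),
then `ℓ j = 0` for all `j ≥ i`. -/
theorem BAm_rep_eq_zero_of_ge (m : ℕ) (a : ℕ → ℕ) (hT : Telescopic m a)
    (i : ℕ) (hi2 : 2 ≤ i) (him : i ≤ m) (ℓ : ℕ → ℕ) (hB : BAm m a ℓ)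
    (hsum : dseq a i * ∑ j ∈ Finset.Icc 1 m, a j * ℓ j = a i * dseq a (i - 1)) :
    ∀ j, i ≤ j → ℓ j = 0 := by
  obtain ⟨hm2, ha2, -, -⟩ := hT
  -- positivity of dseq
  have hdpos : ∀ j, 1 ≤ j → 0 < dseq a j := by
    intro j hj
    rcases Nat.eq_zero_or_pos (dseq a j) with h | h
    · have : dseq a j ∣ a 1 := dseq_dvd a le_rfl hj
      rw [h] at this
      have := Nat.eq_zero_of_zero_dvd this
      have := ha2 1 le_rfl (le_trans one_le_two hm2)
      omega
    · exact h
  set s := ∑ j ∈ Finset.Icc 1 m, a j * ℓ j with hs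
  -- downward induction
  have key : ∀ n j, i ≤ j → m + 1 - j ≤ n → ℓ j = 0 := by
    intro n
    induction n with
    | zero =>
      intro j hij hmj
      exact hB.1 j (Or.inr (by omega))
    | succ n ih =>
      intro j hij hmj
      by_cases hjm : m < j
      · exact hB.1 j (Or.inr hjm)
      push_neg at hjm
      have hz : ∀ k, j < k → ℓ k = 0 := by
        intro k hk
        by_cases hkm : m < k
        · exact hB.1 k (Or.inr hkm)
        · exact ih k (by omega) (by omega)
      have hj2 : 2 ≤ j := le_trans hi2 hij
      -- s restricted
      have hsplit : s = ∑ k ∈ Finset.Icc 1 j, a k * ℓ k := by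
        rw [hs]
        refine (Finset.sum_subset (Finset.Icc_subset_Icc_right hjm) ?_).symm
        intro x hx hx'
        rw [Finset.mem_Icc] at hx hx'
        rw [hz x (by omega), mul_zero]
      have hsplit2 : s = (∑ k ∈ Finset.Icc 1 (j-1), a k * ℓ k) + a j * ℓ j := by
        rw [hsplit, show j = (j-1)+1 by omega, Finset.sum_Icc_succ_top (by omega)]
        norm_num
      -- d_{j-1} divides the partial sum
      have hdT : dseq a (j-1) ∣ ∑ k ∈ Finset.Icc 1 (j-1), a k * ℓ k := by
        refine Finset.dvd_sum fun x hx => ?_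
        rw [Finset.mem_Icc] at hx
        exact Dvd.dvd.mul_right (dseq_dvd a hx.1 hx.2) _
      -- d_{j-1} ∣ s
      have hds : dseq a (j-1) ∣ s := by
        have h1 : dseq a i * dseq a (j-1) ∣ dseq a i * s := by
          rw [hsum]
          rcases eq_or_lt_of_le hij with rfl | hlt
          · exact mul_dvd_mul_right (dseq_dvd a (by omega) le_rfl) _
          · rw [mul_comm (dseq a i)]
            exact mul_dvd_mul (dseq_dvd a (by omega) (by omega))
              (dseq_dvd_dseq a (by omega))
        exact (Nat.mul_dvd_mul_iff_left (hdpos i (by omega))).mp h1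
      -- hence d_{j-1} ∣ a j * ℓ j
      have hdaj : dseq a (j-1) ∣ a j * ℓ j := by
        rw [hsplit2] at hds
        exact (Nat.dvd_add_right hdT).mp hds
      -- set up coprimality
      have hrec : dseq a j = Nat.gcd (a j) (dseq a (j-1)) := by
        have := dseq_succ a (j-1)
        rwa [show j - 1 + 1 = j by omega] at this
      have hgpos : 0 < dseq a j := hdpos j (by omega)
      have hcop : Nat.Coprime (a j / dseq a j) (dseq a (j-1) / dseq a j) := by
        rw [hrec]
        exact Nat.coprime_div_gcd_div_gcd (hrec ▸ hgpos)
      have hgdvd : dseq a j ∣ dseq a (j-1) := dseq_dvd_dseq a (by omega)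
      have hgdvda : dseq a j ∣ a j := dseq_dvd a (by omega) le_rfl
      set g := dseq a j
      set e := dseq a (j-1) / g with he
      have hge : dseq a (j-1) = g * e := (Nat.mul_div_cancel' hgdvd).symm
      have hedvd : e ∣ ℓ j := by
        have h2 : g * e ∣ g * ((a j / g) * ℓ j) := by
          rw [← hge, ← mul_assoc, Nat.mul_div_cancel' hgdvda]
          exact hdaj
        have h3 : e ∣ (a j / g) * ℓ j := (Nat.mul_dvd_mul_iff_left hgpos).mp h2
        exact (Nat.Coprime.dvd_of_dvd_mul_left hcop.symm h3)
      have hlt : ℓ j < e := hB.2 j hj2 hjm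
      exact Nat.eq_zero_of_dvd_of_lt hedvd hlt
  exact fun j hij => key (m + 1 - j) j hij le_rfl
end

section
/- Under the hypotheses on the Laurent series x_1(t), …, x_m(t), let (k_1, …, k_m) ∈ ℤ_{≥0}^m and set N = Σ_{i=1}^m a_i k_i. Then there exist unique complex numbers ρ_J, indexed by the elements J = (J_1, …, J_m) of B(A_m) with Σ_{i=1}^m a_i J_i ≤ N, such that x_1(t)^{k_1} ⋯ x_m(t)^{k_m} = Σ_J ρ_J · x_1(t)^{J_1} ⋯ x_m(t)^{J_m} in ℂ((t)); moreover ρ_{J*} = 1 for the unique J* ∈ B(A_m) with Σ_{i=1}^m a_i J*_i = N, and every ρ_J belongs to ℤ[λ]. -/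
open Finset

/-! ### Auxiliary material -/

lemma dseq_succ_s6 (a : ℕ → ℕ) (i : ℕ) (hi : 1 ≤ i) :
    dseq a i = Nat.gcd (a i) (dseq a (i - 1)) := by
  have : Finset.Icc 1 i = insert i (Finset.Icc 1 (i - 1)) := by
    ext j; simp [Finset.mem_Icc, Finset.mem_insert]; omega
  rw [dseq, this, Finset.gcd_insert]; rfl

lemma dseq_pos (m : ℕ) (a : ℕ → ℕ) (ha : ∀ i, 1 ≤ i → i ≤ m → 2 ≤ a i)
    (i : ℕ) (h1 : 1 ≤ i) (h2 : i ≤ m) : 0 < dseq a i := by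
  rcases Nat.eq_zero_or_pos (dseq a i) with h | h
  · exfalso
    have := Finset.gcd_eq_zero_iff.mp h 1 (by simp [Finset.mem_Icc]; omega)
    have := ha 1 le_rfl (by omega); omega
  · exact h

lemma dseq_dvd_a (a : ℕ → ℕ) (i j : ℕ) (h1 : 1 ≤ j) (h2 : j ≤ i) :
    dseq a i ∣ a j :=
  Finset.gcd_dvd (by simp [Finset.mem_Icc]; omega)

lemma dseq_dvd_prev (a : ℕ → ℕ) (i : ℕ) (hi : 1 ≤ i) :
    dseq a i ∣ dseq a (i - 1) := by
  rw [dseq_succ_s6 a i hi]; exact Nat.gcd_dvd_right _ _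

lemma weight_inj (m : ℕ) (a : ℕ → ℕ) (hm : 1 ≤ m)
    (ha : ∀ i, 1 ≤ i → i ≤ m → 2 ≤ a i)
    (J J' : ℕ → ℕ) (hJ : BAm m a J) (hJ' : BAm m a J')
    (hw : ∑ j ∈ Icc 1 m, a j * J j = ∑ j ∈ Icc 1 m, a j * J' j) : J = J' := by
  have key : ∀ t i, i + t = m → 1 ≤ i →
      (∀ j, i < j → J j = J' j) ∧
      ∑ j ∈ Icc 1 i, a j * J j = ∑ j ∈ Icc 1 i, a j * J' j := by
    intro t
    induction t with
    | zero =>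
      intro i hi _
      refine ⟨fun j hj => ?_, by simpa [show i = m by omega] using hw⟩
      rw [hJ.1 j (Or.inr (by omega)), hJ'.1 j (Or.inr (by omega))]
    | succ t ih =>
      intro i hi h1
      obtain ⟨hgt, hsum⟩ := ih (i + 1) (by omega) (by omega)
      set i' := i + 1 with hi'
      have h2i' : 2 ≤ i' := by omega
      have hi'm : i' ≤ m := by omega
      have hsum' : (∑ j ∈ Icc 1 i, a j * J j) + a i' * J i'
          = (∑ j ∈ Icc 1 i, a j * J' j) + a i' * J' i' := by
        have e1 := Finset.sum_Icc_succ_top (a := 1) (b := i) (by omega)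
          (fun j => a j * J j)
        have e2 := Finset.sum_Icc_succ_top (a := 1) (b := i) (by omega)
          (fun j => a j * J' j)
        rw [← e1, ← e2]; exact hsum
      set D := dseq a i with hD
      set e := dseq a i' with he
      have hepos : 0 < e := dseq_pos m a ha i' (by omega) hi'm
      have heD : e ∣ D := by
        have := dseq_dvd_prev a i' (by omega)
        simpa [he, hD, show i' - 1 = i by omega] using this
      have hea : e ∣ a i' := by
        rw [he, dseq_succ_s6 a i' (by omega)]; exact Nat.gcd_dvd_left _ _
      obtain ⟨c, hc⟩ := heD
      obtain ⟨A, hA⟩ := hea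
      have hcop : Nat.Coprime A c := by
        have : Nat.gcd (a i') D = e := by
          rw [hD, he, dseq_succ_s6 a i' (by omega), show i' - 1 = i from by omega]
        rw [hA, hc, Nat.gcd_mul_left] at this
        have hg : e * Nat.gcd A c = e * 1 := by rw [mul_one]; exact this
        exact Nat.eq_of_mul_eq_mul_left hepos hg
      have hJb : J i' < c := by
        have := hJ.2 i' h2i' hi'm
        rw [show i' - 1 = i by omega, ← hD, ← he, hc] at this
        rwa [Nat.mul_div_cancel_left c hepos] at this
      have hJ'b : J' i' < c := by
        have := hJ'.2 i' h2i' hi'm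
        rw [show i' - 1 = i by omega, ← hD, ← he, hc] at this
        rwa [Nat.mul_div_cancel_left c hepos] at this
      have hDdvd : ∀ K : ℕ → ℕ, D ∣ ∑ j ∈ Icc 1 i, a j * K j := by
        intro K
        apply Finset.dvd_sum
        intro j hj
        simp only [Finset.mem_Icc] at hj
        exact Dvd.dvd.mul_right (dseq_dvd_a a i j hj.1 hj.2) _
      have hz : (D : ℤ) ∣ (a i' : ℤ) * ((J i' : ℤ) - (J' i' : ℤ)) := by
        obtain ⟨u, hu⟩ := hDdvd J
        obtain ⟨v, hv⟩ := hDdvd J'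
        have : ((∑ j ∈ Icc 1 i, a j * J j : ℕ) : ℤ) + (a i' : ℤ) * J i'
            = ((∑ j ∈ Icc 1 i, a j * J' j : ℕ) : ℤ) + (a i' : ℤ) * J' i' := by
          exact_mod_cast congrArg (Nat.cast : ℕ → ℤ) hsum'
        refine ⟨(v : ℤ) - u, ?_⟩
        rw [hu, hv] at this
        push_cast at this ⊢
        ring_nf
        ring_nf at this
        linarith
      have hzc : (c : ℤ) ∣ ((J i' : ℤ) - (J' i' : ℤ)) := by
        rw [hc, hA] at hz
        push_cast at hz
        have h1 : (c : ℤ) ∣ (A : ℤ) * ((J i' : ℤ) - (J' i' : ℤ)) := by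
          rcases hz with ⟨q, hq⟩
          refine ⟨q, ?_⟩
          have he0 : (e : ℤ) ≠ 0 := by exact_mod_cast hepos.ne'
          apply mul_left_cancel₀ he0
          ring_nf
          ring_nf at hq
          linarith
        have hcop' : IsCoprime (c : ℤ) (A : ℤ) := by
          rw [Int.isCoprime_iff_gcd_eq_one, Int.gcd_natCast_natCast]
          exact hcop.symm
        exact (IsCoprime.dvd_of_dvd_mul_left hcop' h1)
      have hii : J i' = J' i' := by
        have habs : |(J i' : ℤ) - (J' i' : ℤ)| < (c : ℤ) := by
          rw [abs_lt]
          refine ⟨by omega, by omega⟩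
        have := Int.eq_zero_of_abs_lt_dvd hzc habs
        omega
      refine ⟨fun j hj => ?_, by rw [hii] at hsum'; omega⟩
      rcases Nat.lt_or_ge i' j with h | h
      · exact hgt j h
      · have : j = i' := by omega
        rw [this]; exact hii
  obtain ⟨hgt, hsum⟩ := key (m - 1) 1 (by omega) le_rfl
  funext j
  rcases Nat.lt_or_ge j 1 with h | h
  · rw [hJ.1 j (Or.inl h), hJ'.1 j (Or.inl h)]
  rcases Nat.lt_or_ge 1 j with h' | h'
  · exact hgt j h'
  · have hj1 : j = 1 := by omega
    subst hj1
    simp only [Finset.Icc_self, Finset.sum_singleton] at hsum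
    have := ha 1 le_rfl hm
    exact Nat.eq_of_mul_eq_mul_left (by omega) hsum

lemma order_eq_of_coeff (y : LaurentSeries ℂ) (o : ℤ)
    (h0 : ∀ n, n < o → y.coeff n = 0) (hl : y.coeff o ≠ 0) :
    y ≠ 0 ∧ y.order = o := by
  have hy : y ≠ 0 := HahnSeries.ne_zero_of_coeff_ne_zero hl
  refine ⟨hy, le_antisymm (HahnSeries.order_le_of_coeff_ne_zero hl) ?_⟩
  by_contra h
  push_neg at h
  exact (mt HahnSeries.coeff_order_eq_zero.mp hy) (h0 _ h)

lemma coeff_finsum {α : Type*} (s : Finset α) (f : α → LaurentSeries ℂ) (n : ℤ) :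
    (∑ j ∈ s, f j).coeff n = ∑ j ∈ s, (f j).coeff n := by
  induction s using Finset.cons_induction with
  | empty => simp
  | cons j s hj ih => simp [Finset.sum_cons, HahnSeries.coeff_add, ih]

lemma prod_pow_order (m : ℕ) (a : ℕ → ℕ) (x : ℕ → LaurentSeries ℂ)
    (hx : ∀ i, 1 ≤ i → i ≤ m → x i ≠ 0 ∧ (x i).order = -(a i : ℤ))
    (s : Finset ℕ) (hs : s ⊆ Icc 1 m) (K : ℕ → ℕ) :
    (∏ j ∈ s, x j ^ K j) ≠ 0 ∧
      (∏ j ∈ s, x j ^ K j).order = -∑ j ∈ s, ((a j : ℤ) * (K j : ℤ)) := by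
  induction s using Finset.cons_induction with
  | empty => simp [HahnSeries.order_one]
  | cons j s hj ih =>
    have hsub : s ⊆ Icc 1 m := fun y hy => hs (Finset.mem_cons.mpr (Or.inr hy))
    obtain ⟨hne, hord⟩ := ih hsub
    have hjm := hs (Finset.mem_cons_self j s)
    simp only [Finset.mem_Icc] at hjm
    obtain ⟨hxj, hxjo⟩ := hx j hjm.1 hjm.2
    have hpowne : x j ^ K j ≠ 0 := pow_ne_zero _ hxj
    constructor
    · rw [Finset.prod_cons]
      exact mul_ne_zero hpowne hne
    · rw [Finset.prod_cons, HahnSeries.order_mul hpowne hne, HahnSeries.order_pow,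
        hxjo, hord, Finset.sum_cons]
      ring

lemma Icc_sum_split {M : Type*} [AddCommMonoid M] (f : ℕ → M) (s i m : ℕ)
    (h2 : s ≤ i + 1) (hm : i ≤ m) :
    ∑ j ∈ Icc s m, f j = ∑ j ∈ Icc s i, f j + ∑ j ∈ Icc (i+1) m, f j := by
  rw [← Finset.Ico_add_one_right_eq_Icc, ← Finset.Ico_add_one_right_eq_Icc, ← Finset.Ico_add_one_right_eq_Icc,
    ← Finset.sum_union (Finset.Ico_disjoint_Ico_consecutive s (i+1) (m+1)),
    Finset.Ico_union_Ico_eq_Ico h2 (by omega)]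

lemma Icc_prod_split {M : Type*} [CommMonoid M] (f : ℕ → M) (s i m : ℕ)
    (h2 : s ≤ i + 1) (hm : i ≤ m) :
    ∏ j ∈ Icc s m, f j = (∏ j ∈ Icc s i, f j) * ∏ j ∈ Icc (i+1) m, f j := by
  rw [← Finset.Ico_add_one_right_eq_Icc, ← Finset.Ico_add_one_right_eq_Icc, ← Finset.Ico_add_one_right_eq_Icc,
    ← Finset.prod_union (Finset.Ico_disjoint_Ico_consecutive s (i+1) (m+1)),
    Finset.Ico_union_Ico_eq_Ico h2 (by omega)]

lemma geo_bound (B : ℕ) (hB : 1 ≤ B) (f : ℕ → ℕ) (hf : ∀ j, f j ≤ B - 1) :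
    ∀ t, 1 ≤ t → (∑ j ∈ Icc 2 t, f j * B ^ (j-1)) + B ≤ B ^ t := by
  intro t
  induction t with
  | zero => omega
  | succ t ih =>
    intro _
    rcases Nat.eq_zero_or_pos t with rfl | ht
    · simp
    have h1 := ih ht
    have h2 : ∑ j ∈ Icc 2 (t+1), f j * B ^ (j-1)
        = (∑ j ∈ Icc 2 t, f j * B ^ (j-1)) + f (t+1) * B ^ t := by
      rw [Finset.sum_Icc_succ_top (by omega) (fun j => f j * B ^ (j-1))]
      simp
    have h3 : f (t+1) * B ^ t ≤ (B - 1) * B ^ t :=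
      Nat.mul_le_mul_right _ (hf _)
    have h4 : B ^ (t+1) = B * B ^ t := by ring
    have h5 : 1 ≤ B ^ t := Nat.one_le_pow _ _ (by omega)
    have h6 : (B - 1) * B ^ t + B ^ t = B * B ^ t := by
      have : (B - 1) + 1 = B := by omega
      nlinarith [this]
    omega

lemma mu_lt_of_wlt (B m : ℕ) (hB : 1 ≤ B) (hm : 1 ≤ m) (w1 w2 : ℕ)
    (k1 k2 : ℕ → ℕ) (hk1 : ∀ j, k1 j ≤ B - 1) (h : w1 < w2) :
    w1 * B ^ m + ∑ j ∈ Icc 2 m, k1 j * B ^ (j-1)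
      < w2 * B ^ m + ∑ j ∈ Icc 2 m, k2 j * B ^ (j-1) := by
  have h1 := geo_bound B hB k1 hk1 m hm
  have h2 : (w1 + 1) * B ^ m ≤ w2 * B ^ m := Nat.mul_le_mul_right _ (by omega)
  have h3 : (w1 + 1) * B ^ m = w1 * B ^ m + B ^ m := by ring
  omega

lemma mu_lt_of_lex (B m i : ℕ) (hB : 1 ≤ B) (h2i : 2 ≤ i) (him : i ≤ m)
    (k1 k2 : ℕ → ℕ) (hk1 : ∀ j, k1 j ≤ B - 1)
    (hlt : k1 i < k2 i) (hgt : ∀ j, i < j → k1 j = k2 j) :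
    ∑ j ∈ Icc 2 m, k1 j * B ^ (j-1) < ∑ j ∈ Icc 2 m, k2 j * B ^ (j-1) := by
  have hs1 := Icc_sum_split (fun j => k1 j * B ^ (j-1)) 2 i m (by omega) him
  have hs2 := Icc_sum_split (fun j => k2 j * B ^ (j-1)) 2 i m (by omega) him
  have htail : ∑ j ∈ Icc (i+1) m, k1 j * B ^ (j-1)
      = ∑ j ∈ Icc (i+1) m, k2 j * B ^ (j-1) := by
    apply Finset.sum_congr rfl
    intro j hj
    simp only [Finset.mem_Icc] at hj
    rw [hgt j (by omega)]
  have hpeel1 : ∑ j ∈ Icc 2 i, k1 j * B ^ (j-1)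
      = (∑ j ∈ Icc 2 (i-1), k1 j * B ^ (j-1)) + k1 i * B ^ (i-1) := by
    have := Finset.sum_Icc_succ_top (a := 2) (b := i - 1) (by omega)
      (fun j => k1 j * B ^ (j-1))
    rw [show i - 1 + 1 = i by omega] at this
    exact this
  have hgeo := geo_bound B hB k1 hk1 (i-1) (by omega)
  have hle : k2 i * B ^ (i-1) ≤ ∑ j ∈ Icc 2 i, k2 j * B ^ (j-1) :=
    Finset.single_le_sum (f := fun j => k2 j * B ^ (j-1))
      (fun j _ => Nat.zero_le _) (by simp [Finset.mem_Icc]; omega)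
  have hkk : (k1 i + 1) * B ^ (i-1) ≤ k2 i * B ^ (i-1) :=
    Nat.mul_le_mul_right _ (by omega)
  have hexp : (k1 i + 1) * B ^ (i-1) = k1 i * B ^ (i-1) + B ^ (i-1) := by ring
  omega

/-- The weight of a monomial exponent tuple. -/
def wtF (m : ℕ) (a K : ℕ → ℕ) : ℕ := ∑ i ∈ Icc 1 m, a i * K i

/-- The monomial in the Laurent series `x 1, …, x m`. -/
noncomputable def PmF (m : ℕ) (x : ℕ → LaurentSeries ℂ) (K : ℕ → ℕ) :
    LaurentSeries ℂ := ∏ j ∈ Icc 1 m, x j ^ K j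

lemma wtF_add (m : ℕ) (a u v : ℕ → ℕ) :
    wtF m a (fun j => u j + v j) = wtF m a u + wtF m a v := by
  simp [wtF, Nat.mul_add, Finset.sum_add_distrib]

lemma PmF_mul (m : ℕ) (x : ℕ → LaurentSeries ℂ) (u v : ℕ → ℕ) :
    PmF m x (fun j => u j + v j) = PmF m x u * PmF m x v := by
  simp [PmF, pow_add, Finset.prod_mul_distrib]

lemma PmF_order (m : ℕ) (a : ℕ → ℕ) (x : ℕ → LaurentSeries ℂ)
    (hord : ∀ i, 1 ≤ i → i ≤ m → ∀ n : ℤ, n < -(a i : ℤ) → (x i).coeff n = 0)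
    (hlead : ∀ i, 1 ≤ i → i ≤ m → (x i).coeff (-(a i : ℤ)) ≠ 0)
    (K : ℕ → ℕ) :
    PmF m x K ≠ 0 ∧ (PmF m x K).order = -(wtF m a K : ℤ) := by
  have hx : ∀ i, 1 ≤ i → i ≤ m → x i ≠ 0 ∧ (x i).order = -(a i : ℤ) := fun i h1 h2 =>
    order_eq_of_coeff _ _ (fun n hn => hord i h1 h2 n hn) (hlead i h1 h2)
  obtain ⟨h1, h2⟩ := prod_pow_order m a x hx (Icc 1 m) subset_rfl K
  refine ⟨h1, ?_⟩
  rw [PmF]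
  rw [h2, wtF]
  push_cast
  ring

lemma PmF_coeff_low (m : ℕ) (a : ℕ → ℕ) (x : ℕ → LaurentSeries ℂ)
    (hord : ∀ i, 1 ≤ i → i ≤ m → ∀ n : ℤ, n < -(a i : ℤ) → (x i).coeff n = 0)
    (hlead : ∀ i, 1 ≤ i → i ≤ m → (x i).coeff (-(a i : ℤ)) ≠ 0)
    (K : ℕ → ℕ) (n : ℤ) (hn : n < -(wtF m a K : ℤ)) :
    (PmF m x K).coeff n = 0 := by
  apply HahnSeries.coeff_eq_zero_of_lt_order
  rw [(PmF_order m a x hord hlead K).2]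
  exact hn

lemma PmF_coeff_top (m : ℕ) (a : ℕ → ℕ) (x : ℕ → LaurentSeries ℂ)
    (hord : ∀ i, 1 ≤ i → i ≤ m → ∀ n : ℤ, n < -(a i : ℤ) → (x i).coeff n = 0)
    (hlead : ∀ i, 1 ≤ i → i ≤ m → (x i).coeff (-(a i : ℤ)) ≠ 0)
    (K : ℕ → ℕ) :
    (PmF m x K).coeff (-(wtF m a K : ℤ)) ≠ 0 := by
  have := mt HahnSeries.coeff_order_eq_zero.mp (PmF_order m a x hord hlead K).1
  rwa [(PmF_order m a x hord hlead K).2] at this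

lemma wtF_entry (m : ℕ) (a : ℕ → ℕ) (ha : ∀ i, 1 ≤ i → i ≤ m → 2 ≤ a i)
    (K : ℕ → ℕ) (j : ℕ) (h1 : 1 ≤ j) (h2 : j ≤ m) : K j ≤ wtF m a K := by
  have hle : a j * K j ≤ wtF m a K :=
    Finset.single_le_sum (f := fun i => a i * K i) (fun i _ => Nat.zero_le _)
      (by simp [Finset.mem_Icc]; omega)
  have haj := ha j h1 h2
  have : K j ≤ a j * K j := Nat.le_mul_of_pos_left _ (by omega)
  omega

lemma cadd_smul (c d : ℂ) (v : LaurentSeries ℂ) : (c + d) • v = c • v + d • v :=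
  add_smul c d v

lemma cmul_smul (c d : ℂ) (v : LaurentSeries ℂ) : (c * d) • v = c • (d • v) :=
  mul_smul c d v

lemma cmul_smul_comm (c : ℂ) (u v : LaurentSeries ℂ) : u * (c • v) = c • (u * v) := by
  rw [← HahnSeries.single_zero_mul_eq_smul, ← HahnSeries.single_zero_mul_eq_smul, mul_left_comm]

lemma csum_smul {α : Type*} (s : Finset α) (f : α → ℂ) (v : LaurentSeries ℂ) :
    (∑ i ∈ s, f i) • v = ∑ i ∈ s, f i • v := by
  induction s using Finset.cons_induction with
  | empty => rw [Finset.sum_empty, Finset.sum_empty]; exact zero_smul ℂ v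
  | cons j s hj ih =>
    rw [Finset.sum_cons, Finset.sum_cons, ← ih]
    exact cadd_smul _ _ _

/-- The specification of the expansion of a monomial in the `φ`-basis. -/
def ExpSpec (m : ℕ) (a : ℕ → ℕ) (lam : ℕ → (ℕ → ℕ) → ℂ) (S : ℕ → Finset (ℕ → ℕ))
    (T : Finset (ℕ → ℕ)) (x : ℕ → LaurentSeries ℂ) (K : ℕ → ℕ)
    (ρ : (ℕ → ℕ) → ℂ) : Prop :=
  PmF m x K = ∑ J ∈ T, ρ J • PmF m x J ∧
  (∀ J, ρ J ∈ Subring.closure {z : ℂ | ∃ i, 2 ≤ i ∧ i ≤ m ∧ ∃ J' ∈ S i, z = lam i J'}) ∧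
  (∀ J, ρ J ≠ 0 → BAm m a J ∧ wtF m a J ≤ wtF m a K) ∧
  ∃ Js, wtF m a Js = wtF m a K ∧ ρ Js = 1 ∧
    ∀ J, ρ J ≠ 0 → J ≠ Js → wtF m a J < wtF m a K


lemma exists_expansion (m : ℕ) (a : ℕ → ℕ) (hm2 : 2 ≤ m)
    (ha : ∀ i, 1 ≤ i → i ≤ m → 2 ≤ a i)
    (ℓmat : ℕ → ℕ → ℕ)
    (hℓ : ∀ i, 2 ≤ i → i ≤ m → BAm m a (ℓmat i) ∧
      dseq a i * ∑ j ∈ Finset.Icc 1 m, a j * ℓmat i j = a i * dseq a (i - 1))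
    (lam : ℕ → (ℕ → ℕ) → ℂ) (S : ℕ → Finset (ℕ → ℕ))
    (hS : ∀ i, 2 ≤ i → i ≤ m → ∀ J : ℕ → ℕ, J ∈ S i → (BAm m a J ∧
      dseq a i * ∑ k ∈ Finset.Icc 1 m, a k * J k < a i * dseq a (i - 1)))
    (x : ℕ → LaurentSeries ℂ)
    (hord : ∀ i, 1 ≤ i → i ≤ m → ∀ n : ℤ, n < -(a i : ℤ) → (x i).coeff n = 0)
    (hlead : ∀ i, 1 ≤ i → i ≤ m → (x i).coeff (-(a i : ℤ)) ≠ 0)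
    (hF : ∀ i, 2 ≤ i → i ≤ m →
      x i ^ (dseq a (i - 1) / dseq a i) =
        ∏ j ∈ Finset.Icc 1 (i - 1), x j ^ ℓmat i j +
          ∑ J ∈ S i, lam i J • ∏ j ∈ Finset.Icc 1 m, x j ^ J j)
    (N : ℕ) (T : Finset (ℕ → ℕ))
    (hTmem : ∀ J : ℕ → ℕ, BAm m a J → wtF m a J ≤ N → J ∈ T) :
    ∀ n (K : ℕ → ℕ), (∀ j, (j < 1 ∨ m < j) → K j = 0) → wtF m a K ≤ N →
      wtF m a K * (N+1)^m + (∑ j ∈ Finset.Icc 2 m, K j * (N+1)^(j-1)) ≤ n →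
      ∃ ρ, ExpSpec m a lam S T x K ρ := by
  classical
  intro n
  induction n using Nat.strong_induction_on with
  | _ n IH =>
  intro K hKsupp hKN hmu
  -- entries of admissible tuples are bounded by N
  have hent : ∀ K0 : ℕ → ℕ, (∀ j, (j < 1 ∨ m < j) → K0 j = 0) → wtF m a K0 ≤ N →
      ∀ j, K0 j ≤ (N+1) - 1 := by
    intro K0 hsupp hwN j
    rcases Nat.lt_or_ge j 1 with h | h
    · rw [hsupp j (Or.inl h)]; omega
    rcases Nat.lt_or_ge m j with h' | h'
    · rw [hsupp j (Or.inr h')]; omega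
    · have := wtF_entry m a ha K0 j h h'
      omega
  by_cases hB : BAm m a K
  · -- base case : K is already a basis exponent
    have hKT : K ∈ T := hTmem K hB hKN
    set ρ0 : (ℕ → ℕ) → ℂ := fun J => if J = K then 1 else 0 with hρ0def
    have hρ0v : ∀ J, ρ0 J = if J = K then 1 else 0 := fun _ => rfl
    refine ⟨ρ0, ?_, ?_, ?_, K, rfl, by rw [hρ0v, if_pos rfl], ?_⟩
    · rw [Finset.sum_eq_single K]
      · rw [hρ0v, if_pos rfl]
        exact (one_smul ℂ _).symm
      · intro J _ hne
        rw [hρ0v, if_neg hne]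
        exact zero_smul ℂ (PmF m x J)
      · intro h; exact absurd hKT h
    · intro J
      rw [hρ0v]
      by_cases h : J = K
      · rw [if_pos h]; exact Subring.one_mem _
      · rw [if_neg h]; exact Subring.zero_mem _
    · intro J hne
      rw [hρ0v] at hne
      by_cases h : J = K
      · subst h; exact ⟨hB, le_rfl⟩
      · rw [if_neg h] at hne; exact absurd rfl hne
    · intro J hne hneK
      rw [hρ0v] at hne
      by_cases h : J = K
      · exact absurd h hneK
      · rw [if_neg h] at hne; exact absurd rfl hne
  · -- inductive step
    have hnotall : ¬ ∀ i, 2 ≤ i → i ≤ m → K i < dseq a (i - 1) / dseq a i :=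
      fun h => hB ⟨hKsupp, h⟩
    push_neg at hnotall
    obtain ⟨i, h2i, him, hKi⟩ := hnotall
    have hFi := hF i h2i him
    set ci := dseq a (i - 1) / dseq a i with hcidef
    have hdprev : dseq a i ∣ dseq a (i - 1) := dseq_dvd_prev a i (by omega)
    have hdiv : dseq a i * ci = dseq a (i - 1) := Nat.mul_div_cancel' hdprev
    have hdpos : 0 < dseq a i := dseq_pos m a ha i (by omega) him
    have hdppos : 0 < dseq a (i - 1) := dseq_pos m a ha (i - 1) (by omega) (by omega)
    have hci1 : 1 ≤ ci := by
      rcases Nat.eq_zero_or_pos ci with h | h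
      · rw [h, Nat.mul_zero] at hdiv; omega
      · exact h
    obtain ⟨hBl, hwl⟩ := hℓ i h2i him
    have hsumL : ∑ j ∈ Finset.Icc 1 m, a j * ℓmat i j = a i * ci := by
      have h1 : dseq a i * (∑ j ∈ Finset.Icc 1 m, a j * ℓmat i j)
          = dseq a i * (a i * ci) := by
        rw [hwl, ← hdiv]; ring
      exact Nat.eq_of_mul_eq_mul_left hdpos h1
    set K' : ℕ → ℕ := fun j => if j = i then K i - ci else K j with hK'def
    set L : ℕ → ℕ := fun j => if j < i then ℓmat i j else 0 with hLdef
    have hK'i : K' i = K i - ci := by simp [hK'def]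
    have hK'ne : ∀ j, j ≠ i → K' j = K j := by
      intro j hj; rw [hK'def]; simp [hj]
    have hLlt : ∀ j, j < i → L j = ℓmat i j := by
      intro j hj; rw [hLdef]; simp [hj]
    have hLge : ∀ j, i ≤ j → L j = 0 := by
      intro j hj; rw [hLdef]; simp [Nat.not_lt.mpr hj]
    -- weight bookkeeping
    have hwK' : wtF m a K = wtF m a K' + a i * ci := by
      have h1 : ∀ j ∈ Finset.Icc 1 m,
          a j * K j = a j * K' j + (if j = i then a i * ci else 0) := by
        intro j _
        by_cases hji : j = i
        · subst hji
          rw [if_pos rfl, hK'i, ← Nat.mul_add, Nat.sub_add_cancel hKi]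
        · rw [if_neg hji, hK'ne j hji, Nat.add_zero]
      calc wtF m a K = ∑ j ∈ Finset.Icc 1 m,
            (a j * K' j + if j = i then a i * ci else 0) :=
          Finset.sum_congr rfl h1
        _ = (∑ j ∈ Finset.Icc 1 m, a j * K' j)
            + ∑ j ∈ Finset.Icc 1 m, (if j = i then a i * ci else 0) :=
          Finset.sum_add_distrib
        _ = wtF m a K' + a i * ci := by
          rw [Finset.sum_ite_eq' (Finset.Icc 1 m) i (fun _ => a i * ci),
            if_pos (by simp [Finset.mem_Icc]; omega)]
          rfl
    have hwtL_le : wtF m a L ≤ a i * ci := by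
      rw [← hsumL, wtF]
      apply Finset.sum_le_sum
      intro j _
      by_cases hji : j < i
      · rw [hLlt j hji]
      · rw [hLge j (by omega)]; exact Nat.zero_le _
    -- product decomposition
    have hPmK : PmF m x K = PmF m x K' * x i ^ ci := by
      have h1 : ∀ j ∈ Finset.Icc 1 m,
          x j ^ K j = x j ^ K' j * (if j = i then x i ^ ci else 1) := by
        intro j _
        by_cases hji : j = i
        · subst hji
          rw [if_pos rfl, hK'i, ← pow_add, Nat.sub_add_cancel hKi]
        · rw [if_neg hji, hK'ne j hji, mul_one]
      calc PmF m x K = ∏ j ∈ Finset.Icc 1 m,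
            (x j ^ K' j * (if j = i then x i ^ ci else 1)) :=
          Finset.prod_congr rfl h1
        _ = (∏ j ∈ Finset.Icc 1 m, x j ^ K' j)
            * ∏ j ∈ Finset.Icc 1 m, (if j = i then x i ^ ci else 1) :=
          Finset.prod_mul_distrib
        _ = PmF m x K' * x i ^ ci := by
          rw [Finset.prod_ite_eq' (Finset.Icc 1 m) i (fun _ => x i ^ ci),
            if_pos (by simp [Finset.mem_Icc]; omega)]
          rfl
    have hL : ∏ j ∈ Finset.Icc 1 (i-1), x j ^ ℓmat i j = PmF m x L := by
      have hsplit := Icc_prod_split (fun j => x j ^ L j) 1 (i-1) m (by omega) (by omega)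
      rw [show i - 1 + 1 = i from by omega] at hsplit
      have h2 : ∏ j ∈ Finset.Icc i m, x j ^ L j = 1 := by
        apply Finset.prod_eq_one
        intro j hj
        simp only [Finset.mem_Icc] at hj
        rw [hLge j hj.1, pow_zero]
      have h3 : ∏ j ∈ Finset.Icc 1 (i-1), x j ^ L j
          = ∏ j ∈ Finset.Icc 1 (i-1), x j ^ ℓmat i j := by
        apply Finset.prod_congr rfl
        intro j hj
        simp only [Finset.mem_Icc] at hj
        rw [hLlt j (by omega)]
      rw [PmF, hsplit, h2, mul_one, h3]
    have hstep : PmF m x K = PmF m x (fun j => K' j + L j)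
        + ∑ J ∈ S i, lam i J • PmF m x (fun j => K' j + J j) := by
      rw [hPmK, hFi, hL, mul_add, Finset.mul_sum, ← PmF_mul]
      congr 1
      apply Finset.sum_congr rfl
      intro J _
      rw [show (∏ j ∈ Finset.Icc 1 m, x j ^ J j) = PmF m x J from rfl, PmF_mul m x K' J]
      exact cmul_smul_comm _ _ _
    have hSmem : ∀ J ∈ S i, BAm m a J ∧ wtF m a J < a i * ci := by
      intro J hJ
      obtain ⟨hb1, hb2⟩ := hS i h2i him J hJ
      refine ⟨hb1, ?_⟩
      have h1 : dseq a i * wtF m a J < dseq a i * (a i * ci) := by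
        rw [show dseq a i * (a i * ci) = a i * (dseq a i * ci) from by ring, hdiv]
        exact hb2
      exact lt_of_mul_lt_mul_left h1 (Nat.zero_le _)
    rcases lt_or_eq_of_le hwtL_le with hlt | heq
    · -- impossible: the bottom coefficient of the LHS cannot be matched
      exfalso
      have hwhd : wtF m a (fun j => K' j + L j) < wtF m a K := by
        rw [wtF_add, hwK']; omega
      have hwJ : ∀ J ∈ S i, wtF m a (fun j => K' j + J j) < wtF m a K := by
        intro J hJ
        rw [wtF_add, hwK']
        have := (hSmem J hJ).2
        omega
      have h0 : (PmF m x K).coeff (-(wtF m a K : ℤ)) = 0 := by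
        rw [hstep, HahnSeries.coeff_add,
          PmF_coeff_low m a x hord hlead _ _ (by push_cast; omega), zero_add,
          coeff_finsum]
        apply Finset.sum_eq_zero
        intro J hJ
        rw [HahnSeries.coeff_smul,
          PmF_coeff_low m a x hord hlead _ _ (by have := hwJ J hJ; push_cast; omega)]
        exact smul_zero _
      exact PmF_coeff_top m a x hord hlead K h0
    · -- main case : the head term has the same weight
      have hLeq : ∀ j, L j = ℓmat i j := by
        have hsum_eq : ∑ j ∈ Finset.Icc 1 m, a j * L j
            = ∑ j ∈ Finset.Icc 1 m, a j * ℓmat i j := by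
          rw [hsumL, ← heq]; rfl
        have hle_pt : ∀ j ∈ Finset.Icc 1 m, a j * L j ≤ a j * ℓmat i j := by
          intro j _
          by_cases hji : j < i
          · rw [hLlt j hji]
          · rw [hLge j (by omega)]; exact Nat.zero_le _
        have hpt := (Finset.sum_eq_sum_iff_of_le hle_pt).mp hsum_eq
        intro j
        by_cases hji : j < i
        · exact hLlt j hji
        · rw [hLge j (by omega)]
          rcases Nat.lt_or_ge m j with h' | h'
          · rw [hBl.1 j (Or.inr h')]
          · have hj1 : 1 ≤ j := by omega
            have hpt' := hpt j (by simp [Finset.mem_Icc]; omega)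
            have haj := ha j hj1 h'
            have h0 : a j * ℓmat i j = 0 := by
              rw [← hpt', hLge j (by omega), Nat.mul_zero]
            rcases Nat.mul_eq_zero.mp h0 with h0 | h0 <;> omega
      have hwhd : wtF m a (fun j => K' j + L j) = wtF m a K := by
        rw [wtF_add, hwK', heq]
      have hhdsupp : ∀ j, (j < 1 ∨ m < j) → K' j + L j = 0 := by
        intro j hj
        have hji : j ≠ i := by rcases hj with h | h <;> omega
        rw [hK'ne j hji, hKsupp j hj, hLeq j, hBl.1 j (by rcases hj with h | h <;> omega)]
      have hhdN : wtF m a (fun j => K' j + L j) ≤ N := by rw [hwhd]; exact hKN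
      -- the head term is smaller in the lexicographic measure
      have hmuhd : wtF m a (fun j => K' j + L j) * (N+1)^m
          + (∑ j ∈ Finset.Icc 2 m, (K' j + L j) * (N+1)^(j-1))
          < wtF m a K * (N+1)^m + (∑ j ∈ Finset.Icc 2 m, K j * (N+1)^(j-1)) := by
        rw [hwhd]
        apply Nat.add_lt_add_left
        apply mu_lt_of_lex (N+1) m i (by omega) h2i him _ _
          (hent _ hhdsupp hhdN)
        · rw [hK'i, hLge i le_rfl]
          omega
        · intro j hj
          rw [hK'ne j (by omega), hLge j (by omega)]
          omega
      obtain ⟨ρh, hρh⟩ := IH _ (lt_of_lt_of_le hmuhd hmu) _ hhdsupp hhdN le_rfl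
      -- the lambda terms have strictly smaller weight
      have hwJlt : ∀ J ∈ S i, wtF m a (fun j => K' j + J j) < wtF m a K := by
        intro J hJ
        rw [wtF_add, hwK']
        have := (hSmem J hJ).2
        omega
      have hJsupp : ∀ J ∈ S i, ∀ j, (j < 1 ∨ m < j) → K' j + J j = 0 := by
        intro J hJ j hj
        have hji : j ≠ i := by rcases hj with h | h <;> omega
        rw [hK'ne j hji, hKsupp j hj, (hSmem J hJ).1.1 j hj]
      have hsatJ : ∀ J ∈ S i, ∃ ρ, ExpSpec m a lam S T x (fun j => K' j + J j) ρ := by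
        intro J hJ
        have hwn : wtF m a (fun j => K' j + J j) ≤ N :=
          le_trans (le_of_lt (hwJlt J hJ)) hKN
        refine IH _ ?_ _ (hJsupp J hJ) hwn le_rfl
        calc wtF m a (fun j => K' j + J j) * (N+1)^m
              + (∑ j ∈ Finset.Icc 2 m, (K' j + J j) * (N+1)^(j-1))
            < wtF m a K * (N+1)^m + (∑ j ∈ Finset.Icc 2 m, K j * (N+1)^(j-1)) :=
              mu_lt_of_wlt (N+1) m (by omega) (by omega) _ _ _ _
                (hent _ (hJsupp J hJ) hwn) (hwJlt J hJ)
          _ ≤ n := hmu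
      choose ρJ hρJ using hsatJ
      -- assemble the expansion coefficients
      set ρ : (ℕ → ℕ) → ℂ := fun J' => ρh J'
        + ∑ J ∈ (S i).attach, lam i J.1 * ρJ J.1 J.2 J' with hρdef
      have hρval : ∀ J', ρ J' = ρh J'
          + ∑ J ∈ (S i).attach, lam i J.1 * ρJ J.1 J.2 J' := fun J' => rfl
      refine ⟨ρ, ?_, ?_, ?_, ?_⟩
      · -- the expansion identity
        have hsum1 : ∑ J' ∈ T, ρ J' • PmF m x J'
            = (∑ J' ∈ T, ρh J' • PmF m x J')
              + ∑ J' ∈ T, (∑ J ∈ (S i).attach, lam i J.1 * ρJ J.1 J.2 J') • PmF m x J' := by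
          rw [← Finset.sum_add_distrib]
          apply Finset.sum_congr rfl
          intro J' _
          rw [hρval]
          exact cadd_smul _ _ _
        have hsum2 : ∑ J' ∈ T, (∑ J ∈ (S i).attach, lam i J.1 * ρJ J.1 J.2 J') • PmF m x J'
            = ∑ J ∈ (S i).attach, lam i J.1 • PmF m x (fun j => K' j + J.1 j) := by
          calc ∑ J' ∈ T, (∑ J ∈ (S i).attach, lam i J.1 * ρJ J.1 J.2 J') • PmF m x J'
              = ∑ J' ∈ T, ∑ J ∈ (S i).attach,
                  (lam i J.1 * ρJ J.1 J.2 J') • PmF m x J' := by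
                apply Finset.sum_congr rfl
                intro J' _
                exact csum_smul _ _ _
            _ = ∑ J ∈ (S i).attach, ∑ J' ∈ T,
                  (lam i J.1 * ρJ J.1 J.2 J') • PmF m x J' := Finset.sum_comm
            _ = ∑ J ∈ (S i).attach, lam i J.1 • PmF m x (fun j => K' j + J.1 j) := by
                apply Finset.sum_congr rfl
                intro J _
                calc ∑ J' ∈ T, (lam i J.1 * ρJ J.1 J.2 J') • PmF m x J'
                    = lam i J.1 • ∑ J' ∈ T, ρJ J.1 J.2 J' • PmF m x J' := by
                      rw [Finset.smul_sum]
                      apply Finset.sum_congr rfl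
                      intro J' _
                      exact cmul_smul _ _ _
                  _ = lam i J.1 • PmF m x (fun j => K' j + J.1 j) := by
                      rw [← (hρJ J.1 J.2).1]
        rw [hsum1, hsum2, ← (hρh).1, hstep]
        congr 1
        exact (Finset.sum_attach (S i)
          (fun J => lam i J • PmF m x (fun j => K' j + J j))).symm
      · -- coefficients lie in ℤ[λ]
        intro J'
        rw [hρval]
        apply Subring.add_mem _ ((hρh).2.1 J')
        apply Subring.sum_mem
        intro J _
        exact Subring.mul_mem _
          (Subring.subset_closure ⟨i, h2i, him, J.1, J.2, rfl⟩)
          ((hρJ J.1 J.2).2.1 J')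
      · -- support control
        intro J' hne
        rw [hρval] at hne
        by_cases hh : ρh J' = 0
        · rw [hh, zero_add] at hne
          obtain ⟨J, hJ, hJne⟩ := Finset.exists_ne_zero_of_sum_ne_zero hne
          have hr : ρJ J.1 J.2 J' ≠ 0 := right_ne_zero_of_mul hJne
          obtain ⟨hBJ', hwle⟩ := (hρJ J.1 J.2).2.2.1 J' hr
          exact ⟨hBJ', le_trans hwle (le_of_lt (hwJlt J.1 J.2))⟩
        · obtain ⟨hBJ', hwle⟩ := (hρh).2.2.1 J' hh
          exact ⟨hBJ', by rw [← hwhd]; exact hwle⟩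
      · -- the top coefficient
        obtain ⟨Js, hJsw, hJs1, hJslt⟩ := (hρh).2.2.2
        have hJsw' : wtF m a Js = wtF m a K := hJsw.trans hwhd
        refine ⟨Js, hJsw', ?_, ?_⟩
        · rw [hρval, hJs1]
          have hz : ∑ J ∈ (S i).attach, lam i J.1 * ρJ J.1 J.2 Js = 0 := by
            apply Finset.sum_eq_zero
            intro J _
            have : ρJ J.1 J.2 Js = 0 := by
              by_contra hcon
              have := ((hρJ J.1 J.2).2.2.1 Js hcon).2
              have := hwJlt J.1 J.2
              omega
            rw [this, mul_zero]
          rw [hz, add_zero]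
        · intro J' hne hneJs
          rw [hρval] at hne
          by_cases hh : ρh J' = 0
          · rw [hh, zero_add] at hne
            obtain ⟨J, hJ, hJne⟩ := Finset.exists_ne_zero_of_sum_ne_zero hne
            have hr : ρJ J.1 J.2 J' ≠ 0 := right_ne_zero_of_mul hJne
            have := ((hρJ J.1 J.2).2.2.1 J' hr).2
            have := hwJlt J.1 J.2
            omega
          · have := hJslt J' hh hneJs
            omega


lemma csub_smul (c d : ℂ) (v : LaurentSeries ℂ) : (c - d) • v = c • v - d • v :=
  sub_smul c d v

lemma unique_expansion (m : ℕ) (a : ℕ → ℕ) (hm : 1 ≤ m)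
    (ha : ∀ i, 1 ≤ i → i ≤ m → 2 ≤ a i)
    (x : ℕ → LaurentSeries ℂ)
    (hord : ∀ i, 1 ≤ i → i ≤ m → ∀ n : ℤ, n < -(a i : ℤ) → (x i).coeff n = 0)
    (hlead : ∀ i, 1 ≤ i → i ≤ m → (x i).coeff (-(a i : ℤ)) ≠ 0)
    (T : Finset (ℕ → ℕ)) (hTB : ∀ J ∈ T, BAm m a J)
    (ρ1 ρ2 : (ℕ → ℕ) → ℂ) (h1 : ∀ J ∉ T, ρ1 J = 0) (h2 : ∀ J ∉ T, ρ2 J = 0)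
    (heq : ∑ J ∈ T, ρ1 J • PmF m x J = ∑ J ∈ T, ρ2 J • PmF m x J) : ρ1 = ρ2 := by
  classical
  by_contra hne
  obtain ⟨J0', hJ0'⟩ := Function.ne_iff.mp hne
  have hσsum : ∑ J ∈ T, (ρ1 J - ρ2 J) • PmF m x J = 0 := by
    have h3 : ∑ J ∈ T, (ρ1 J - ρ2 J) • PmF m x J
        = ∑ J ∈ T, (ρ1 J • PmF m x J - ρ2 J • PmF m x J) := by
      apply Finset.sum_congr rfl
      intro J _
      exact csub_smul _ _ _
    rw [h3, Finset.sum_sub_distrib, heq, sub_self]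
  have hJ0'T : J0' ∈ T := by
    by_contra h
    exact hJ0' (by rw [h1 J0' h, h2 J0' h])
  have hsne : (T.filter fun J => ρ1 J - ρ2 J ≠ 0).Nonempty :=
    ⟨J0', Finset.mem_filter.mpr ⟨hJ0'T, sub_ne_zero.mpr hJ0'⟩⟩
  obtain ⟨J0, hJ0mem, hJ0min⟩ :=
    Finset.exists_max_image _ (fun J => wtF m a J) hsne
  rw [Finset.mem_filter] at hJ0mem
  obtain ⟨hJ0T, hσJ0⟩ := hJ0mem
  have hco := congrArg (fun y : LaurentSeries ℂ => y.coeff (-(wtF m a J0 : ℤ))) hσsum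
  simp only [HahnSeries.coeff_zero] at hco
  rw [coeff_finsum] at hco
  have hco2 : ∑ J ∈ T, (ρ1 J - ρ2 J) * (PmF m x J).coeff (-(wtF m a J0 : ℤ)) = 0 := by
    rw [← hco]
    apply Finset.sum_congr rfl
    intro J _
    rw [HahnSeries.coeff_smul]
    rfl
  rw [Finset.sum_eq_single J0] at hco2
  · exact (mul_ne_zero hσJ0 (PmF_coeff_top m a x hord hlead J0)) hco2
  · intro J hJT hJne
    by_cases hσJ : ρ1 J - ρ2 J = 0
    · rw [hσJ, zero_mul]
    · have hJmin := hJ0min J (Finset.mem_filter.mpr ⟨hJT, hσJ⟩)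
      have hwne : wtF m a J ≠ wtF m a J0 := fun h =>
        hJne (weight_inj m a hm ha J J0 (hTB J hJT) (hTB J0 hJ0T) h)
      have hlt : wtF m a J < wtF m a J0 := lt_of_le_of_ne hJmin hwne
      rw [PmF_coeff_low m a x hord hlead J (-(wtF m a J0 : ℤ)) (by push_cast; omega), mul_zero]
  · intro h; exact absurd hJ0T h

/-- Under the hypotheses on the Laurent series `x 1, …, x m` (the arithmetic local
parameter setting), let `(k 1, …, k m)` be a tuple of non-negative integers and set
`N = Σ_{i=1}^m a i * k i`.  Let `T` be the finite set of all `J ∈ B(A_m)` with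
`Σ_i a i * J i ≤ N`.  Then there exist unique complex numbers `ρ J` (`J ∈ T`,
encoded as a function vanishing outside `T`) such that
`x 1 ^ k 1 ⋯ x m ^ k m = Σ_{J ∈ T} ρ J • x 1 ^ J 1 ⋯ x m ^ J m`; moreover
`ρ J⋆ = 1` for the unique `J⋆ ∈ B(A_m)` with `Σ_i a i * J⋆ i = N`, and every
`ρ J` belongs to `ℤ[λ]`. -/
theorem monomial_expansion_in_phi_basis (m : ℕ) (a : ℕ → ℕ) (hT : Telescopic m a)
    (ℓmat : ℕ → ℕ → ℕ)
    (hℓ : ∀ i, 2 ≤ i → i ≤ m → BAm m a (ℓmat i) ∧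
      dseq a i * ∑ j ∈ Finset.Icc 1 m, a j * ℓmat i j = a i * dseq a (i - 1))
    (lam : ℕ → (ℕ → ℕ) → ℂ)
    (S : ℕ → Finset (ℕ → ℕ))
    (hS : ∀ i, 2 ≤ i → i ≤ m → ∀ J : ℕ → ℕ, J ∈ S i ↔ (BAm m a J ∧
      dseq a i * ∑ k ∈ Finset.Icc 1 m, a k * J k < a i * dseq a (i - 1)))
    (b : ℕ → ℤ) (hb : ∑ j ∈ Finset.Icc 1 m, (a j : ℤ) * b j = -1)
    (x : ℕ → LaurentSeries ℂ)
    (hord : ∀ i, 1 ≤ i → i ≤ m → ∀ n : ℤ, n < -(a i : ℤ) → (x i).coeff n = 0)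
    (hlead : ∀ i, 1 ≤ i → i ≤ m → (x i).coeff (-(a i : ℤ)) ≠ 0)
    (hF : ∀ i, 2 ≤ i → i ≤ m →
      x i ^ (dseq a (i - 1) / dseq a i) =
        ∏ j ∈ Finset.Icc 1 (i - 1), x j ^ ℓmat i j +
          ∑ J ∈ S i, lam i J • ∏ j ∈ Finset.Icc 1 m, x j ^ J j)
    (ht : ∏ j ∈ Finset.Icc 1 m, x j ^ b j = HahnSeries.single (1 : ℤ) (1 : ℂ))
    (k : ℕ → ℕ) (hk : ∀ j, (j < 1 ∨ m < j) → k j = 0)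
    (N : ℕ) (hN : N = ∑ i ∈ Finset.Icc 1 m, a i * k i)
    (T : Finset (ℕ → ℕ))
    (hTmem : ∀ J : ℕ → ℕ, J ∈ T ↔ (BAm m a J ∧ ∑ i ∈ Finset.Icc 1 m, a i * J i ≤ N)) :
    (∃! ρ : (ℕ → ℕ) → ℂ, (∀ J ∉ T, ρ J = 0) ∧
      ∏ j ∈ Finset.Icc 1 m, x j ^ k j =
        ∑ J ∈ T, ρ J • ∏ j ∈ Finset.Icc 1 m, x j ^ J j) ∧
    ∀ ρ : (ℕ → ℕ) → ℂ, ((∀ J ∉ T, ρ J = 0) ∧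
      ∏ j ∈ Finset.Icc 1 m, x j ^ k j =
        ∑ J ∈ T, ρ J • ∏ j ∈ Finset.Icc 1 m, x j ^ J j) →
      (∀ J ∈ T, ∑ i ∈ Finset.Icc 1 m, a i * J i = N → ρ J = 1) ∧
      ∀ J, ρ J ∈ Subring.closure {z : ℂ | ∃ i, 2 ≤ i ∧ i ≤ m ∧ ∃ J' ∈ S i, z = lam i J'} := by
  
  classical
  obtain ⟨hm2, ha, -, -⟩ := hT
  have hm1 : 1 ≤ m := by omega
  have hS' : ∀ i, 2 ≤ i → i ≤ m → ∀ J : ℕ → ℕ, J ∈ S i → (BAm m a J ∧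
      dseq a i * ∑ k ∈ Finset.Icc 1 m, a k * J k < a i * dseq a (i - 1)) :=
    fun i h1 h2 J hJ => (hS i h1 h2 J).mp hJ
  have hTmem' : ∀ J : ℕ → ℕ, BAm m a J → wtF m a J ≤ N → J ∈ T :=
    fun J hB hw => (hTmem J).mpr ⟨hB, hw⟩
  have hTB : ∀ J ∈ T, BAm m a J := fun J hJ => ((hTmem J).mp hJ).1
  have hkN : wtF m a k ≤ N := le_of_eq hN.symm
  obtain ⟨ρhat, hspec⟩ := exists_expansion m a hm2 ha ℓmat hℓ lam S hS' x hord hlead hF N T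
    hTmem' (wtF m a k * (N+1)^m + ∑ j ∈ Finset.Icc 2 m, k j * (N+1)^(j-1)) k hk hkN le_rfl
  obtain ⟨hsum, hclos, hsupp, Js, hJsw, hJs1, -⟩ := hspec
  have hvan : ∀ J ∉ T, ρhat J = 0 := by
    intro J hJ
    by_contra h
    obtain ⟨hBJ, hw⟩ := hsupp J h
    exact hJ (hTmem' J hBJ (le_trans hw hkN))
  have huniq : ∀ ρ' : (ℕ → ℕ) → ℂ, ((∀ J ∉ T, ρ' J = 0) ∧
      ∏ j ∈ Finset.Icc 1 m, x j ^ k j =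
        ∑ J ∈ T, ρ' J • ∏ j ∈ Finset.Icc 1 m, x j ^ J j) → ρ' = ρhat := by
    intro ρ' h'
    exact unique_expansion m a hm1 ha x hord hlead T hTB ρ' ρhat h'.1 hvan
      (h'.2.symm.trans hsum)
  constructor
  · exact ⟨ρhat, ⟨hvan, hsum⟩, fun ρ' h' => huniq ρ' h'⟩
  · intro ρ' h'
    have hρ' : ρ' = ρhat := huniq ρ' h'
    constructor
    · intro J hJT hwJ
      rw [hρ']
      have hBJs : BAm m a Js := (hsupp Js (by rw [hJs1]; exact one_ne_zero)).1
      have hJeq : J = Js := weight_inj m a hm1 ha J Js (hTB J hJT) hBJs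
        (hwJ.trans (hN.trans hJsw.symm))
      rw [hJeq]
      exact hJs1
    · intro J
      rw [hρ']
      exact hclos J
end
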